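/- Let M₀ ∈ ℝ and let w be twice continuously differentiable on the open strip Π = ℝ × (M₀, ∞), satisfying Δw + k²w = 0 on Π and w(x+L, y) = ν w(x,y) for all (x,y) ∈ Π. For j ∈ ℤ define the mode w_j(y) = ∫₀^L w(x,y) \overline{φ_j(x)} dx. Then each w_j is twice continuously differentiable on (M₀, ∞) and satisfies the ordinary differential equation w_j''(y) + (k² − λ_j²) w_j(y) = 0 for all y > M₀. -/

import Mathlib

set_option maxHeartbeats 1000000
open MeasureTheory Set

lemma slice_cont {M₀ : ℝ} {c : ℝ → ℂ} (hc : Continuous c) {g : ℝ → ℝ → ℂ}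
    (hg : ContinuousOn (fun p : ℝ × ℝ => g p.1 p.2) {p : ℝ × ℝ | M₀ < p.2})
    {y : ℝ} (hy : M₀ < y) (s : Set ℝ) :
    ContinuousOn (fun x => g x y * c x) s := by
  refine ContinuousOn.mul ?_ hc.continuousOn
  exact hg.comp (Continuous.continuousOn (continuous_id.prodMk continuous_const)) (fun x _ => hy)

lemma compact_bound {M₀ : ℝ} {g : ℝ → ℝ → ℂ}
    (hg : ContinuousOn (fun p : ℝ × ℝ => g p.1 p.2) {p : ℝ × ℝ | M₀ < p.2})
    {L y₀ ε : ℝ} (hε : 0 < ε) (hsub : Set.Icc (y₀ - ε) (y₀ + ε) ⊆ Set.Ioi M₀) :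
    ∃ C : ℝ, ∀ x ∈ Set.uIcc 0 L, ∀ y ∈ Set.Icc (y₀ - ε) (y₀ + ε), ‖g x y‖ ≤ C := by
  have hK : IsCompact ((Set.uIcc (0:ℝ) L) ×ˢ (Set.Icc (y₀ - ε) (y₀ + ε))) :=
    isCompact_uIcc.prod isCompact_Icc
  have hKs : ((Set.uIcc (0:ℝ) L) ×ˢ (Set.Icc (y₀ - ε) (y₀ + ε))) ⊆ {p : ℝ × ℝ | M₀ < p.2} :=
    fun p hp => hsub hp.2
  obtain ⟨C, hC⟩ := hK.exists_bound_of_continuousOn (hg.mono hKs)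
  exact ⟨C, fun x hx y hy => hC (x, y) ⟨hx, hy⟩⟩

lemma key_deriv {M₀ L : ℝ} {c : ℝ → ℂ} (hc : Continuous c) {u v : ℝ → ℝ → ℂ}
    (hu : ContinuousOn (fun p : ℝ × ℝ => u p.1 p.2) {p : ℝ × ℝ | M₀ < p.2})
    (hv : ContinuousOn (fun p : ℝ × ℝ => v p.1 p.2) {p : ℝ × ℝ | M₀ < p.2})
    (hd : ∀ x y : ℝ, M₀ < y → HasDerivAt (fun t => u x t) (v x y) y)
    {y₀ : ℝ} (hy : M₀ < y₀) :
    HasDerivAt (fun y => ∫ x in (0:ℝ)..L, u x y * c x)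
      (∫ x in (0:ℝ)..L, v x y₀ * c x) y₀ := by
  set ε := (y₀ - M₀) / 2 with hεdef
  have hε : 0 < ε := div_pos (by linarith) two_pos
  have hsub : Set.Icc (y₀ - ε) (y₀ + ε) ⊆ Set.Ioi M₀ := by
    intro z hz
    simp only [Set.mem_Ioi]
    have := hz.1
    simp only [hεdef] at this ⊢
    linarith
  obtain ⟨C, hC⟩ := compact_bound hv (L := L) hε hsub
  obtain ⟨D, hD⟩ := ((isCompact_uIcc (a := (0:ℝ)) (b := L)).exists_bound_of_continuousOn
    hc.continuousOn)
  have hball : Metric.ball y₀ ε ⊆ Set.Icc (y₀ - ε) (y₀ + ε) := by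
    intro z hz
    rw [Metric.mem_ball, Real.dist_eq, abs_lt] at hz
    constructor <;> linarith [hz.1, hz.2]
  have hmeas : ∀ᶠ y in nhds y₀, AEStronglyMeasurable (fun x => u x y * c x)
      (volume.restrict (Set.uIoc 0 L)) := by
    filter_upwards [isOpen_Ioi.eventually_mem (show y₀ ∈ Set.Ioi M₀ from hy)] with y hy'
    exact ((slice_cont hc hu hy' (Set.uIcc 0 L)).mono Set.uIoc_subset_uIcc).aestronglyMeasurable
      measurableSet_uIoc
  have hint : IntervalIntegrable (fun x => u x y₀ * c x) volume 0 L :=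
    (slice_cont hc hu hy (Set.uIcc 0 L)).intervalIntegrable
  have h'meas : AEStronglyMeasurable (fun x => v x y₀ * c x)
      (volume.restrict (Set.uIoc 0 L)) :=
    ((slice_cont hc hv hy (Set.uIcc 0 L)).mono Set.uIoc_subset_uIcc).aestronglyMeasurable
      measurableSet_uIoc
  have hbound : ∀ᵐ x ∂volume, x ∈ Set.uIoc 0 L → ∀ y ∈ Metric.ball y₀ ε,
      ‖v x y * c x‖ ≤ C * D := by
    refine Filter.Eventually.of_forall (fun x hx y hyb => ?_)
    rw [norm_mul]
    have h1 := hC x (Set.uIoc_subset_uIcc hx) y (hball hyb)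
    have h2 := hD x (Set.uIoc_subset_uIcc hx)
    exact mul_le_mul h1 h2 (norm_nonneg _) ((norm_nonneg _).trans h1)
  have hboundint : IntervalIntegrable (fun _ : ℝ => C * D) volume 0 L :=
    intervalIntegrable_const
  have hdiff : ∀ᵐ x ∂volume, x ∈ Set.uIoc 0 L → ∀ y ∈ Metric.ball y₀ ε,
      HasDerivAt (fun y => u x y * c x) (v x y * c x) y := by
    refine Filter.Eventually.of_forall (fun x _ y hyb => ?_)
    exact (hd x y (hsub (hball hyb)).out).mul_const (c x)
  exact (intervalIntegral.hasDerivAt_integral_of_dominated_loc_of_deriv_le (Metric.ball_mem_nhds y₀ hε) hmeas hint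
    h'meas hbound hboundint hdiff).2

lemma key_cont {M₀ L : ℝ} {c : ℝ → ℂ} (hc : Continuous c) {v : ℝ → ℝ → ℂ}
    (hv : ContinuousOn (fun p : ℝ × ℝ => v p.1 p.2) {p : ℝ × ℝ | M₀ < p.2}) :
    ContinuousOn (fun y => ∫ x in (0:ℝ)..L, v x y * c x) (Set.Ioi M₀) := by
  intro y₀ hy₀
  have hy : M₀ < y₀ := hy₀
  set ε := (y₀ - M₀) / 2 with hεdef
  have hε : 0 < ε := div_pos (by linarith) two_pos
  have hsub : Set.Icc (y₀ - ε) (y₀ + ε) ⊆ Set.Ioi M₀ := by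
    intro z hz
    have := hz.1
    simp only [hεdef, Set.mem_Ioi] at this ⊢
    linarith
  obtain ⟨C, hC⟩ := compact_bound hv (L := L) hε hsub
  obtain ⟨D, hD⟩ := ((isCompact_uIcc (a := (0:ℝ)) (b := L)).exists_bound_of_continuousOn
    hc.continuousOn)
  have hball : Metric.ball y₀ ε ⊆ Set.Icc (y₀ - ε) (y₀ + ε) := by
    intro z hz
    rw [Metric.mem_ball, Real.dist_eq, abs_lt] at hz
    constructor <;> linarith [hz.1, hz.2]
  have hopen : IsOpen {p : ℝ × ℝ | M₀ < p.2} := isOpen_lt continuous_const continuous_snd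
  refine (intervalIntegral.continuousAt_of_dominated_interval ?_ ?_
    (intervalIntegrable_const (c := C * D)) ?_).continuousWithinAt
  · filter_upwards [isOpen_Ioi.eventually_mem (show y₀ ∈ Set.Ioi M₀ from hy)] with y hy'
    exact ((slice_cont hc hv hy' (Set.uIcc 0 L)).mono Set.uIoc_subset_uIcc).aestronglyMeasurable
      measurableSet_uIoc
  · filter_upwards [Metric.ball_mem_nhds y₀ hε] with y hyb
    refine Filter.Eventually.of_forall (fun x hx => ?_)
    rw [norm_mul]
    have h1 := hC x (Set.uIoc_subset_uIcc hx) y (hball hyb)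
    have h2 := hD x (Set.uIoc_subset_uIcc hx)
    exact mul_le_mul h1 h2 (norm_nonneg _) ((norm_nonneg _).trans h1)
  · refine Filter.Eventually.of_forall (fun x _ => ?_)
    have h1 : ContinuousAt (fun y => v x y) y₀ := by
      have := (hv ((x, y₀)) hy).continuousAt (hopen.mem_nhds hy)
      exact this.comp (Continuous.continuousAt (continuous_const.prodMk continuous_id))
    exact h1.mul continuousAt_const


/- STATEMENT 9:
Context: L > 0, k > 0, θ ∈ (0,π/2), ν = e^{ikL cos θ}, λ_j = k cos θ + 2πj/L,
φ_j(x) = e^{iλ_j x}/√L.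
Let M₀ ∈ ℝ and let w be twice continuously differentiable on the strip
Π = ℝ × (M₀,∞) (partials w1, w2 and second partials w11, w22 given, all continuous on Π),
with Δw + k²w = 0 on Π and w(x+L,y) = ν w(x,y).
Define w_j(y) = ∫₀^L w(x,y) conj(φ_j(x)) dx.  Then each w_j is C² on (M₀,∞) and
w_j''(y) + (k² − λ_j²) w_j(y) = 0 for all y > M₀. -/
theorem statement9
    (L k θ M₀ : ℝ) (hL : 0 < L) (hk : 0 < k) (hθ : θ ∈ Set.Ioo 0 (Real.pi / 2))
    (ν : ℂ) (hν : ν = Complex.exp (Complex.I * k * L * Real.cos θ))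
    (lam : ℤ → ℝ) (hlam : ∀ j : ℤ, lam j = k * Real.cos θ + 2 * Real.pi * j / L)
    (φ : ℤ → ℝ → ℂ)
    (hφ : ∀ (j : ℤ) (x : ℝ), φ j x = Complex.exp (Complex.I * lam j * x) / Real.sqrt L)
    (w w1 w2 w11 w22 : ℝ → ℝ → ℂ)
    (hcont : ∀ g ∈ ({w, w1, w2, w11, w22} : Set (ℝ → ℝ → ℂ)),
      ContinuousOn (fun p : ℝ × ℝ => g p.1 p.2) {p : ℝ × ℝ | M₀ < p.2})
    (hd1 : ∀ x y : ℝ, M₀ < y → HasDerivAt (fun t => w t y) (w1 x y) x)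
    (hd2 : ∀ x y : ℝ, M₀ < y → HasDerivAt (fun t => w x t) (w2 x y) y)
    (hd11 : ∀ x y : ℝ, M₀ < y → HasDerivAt (fun t => w1 t y) (w11 x y) x)
    (hd22 : ∀ x y : ℝ, M₀ < y → HasDerivAt (fun t => w2 x t) (w22 x y) y)
    (helm : ∀ x y : ℝ, M₀ < y → w11 x y + w22 x y + (k : ℂ) ^ 2 * w x y = 0)
    (hqp : ∀ x y : ℝ, M₀ < y → w (x + L) y = ν * w x y) :
    ∀ j : ℤ,
      ContDiffOn ℝ 2
        (fun y => ∫ x in (0 : ℝ)..L, w x y * (starRingEnd ℂ) (φ j x)) (Set.Ioi M₀)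
      ∧ ∀ y ∈ Set.Ioi M₀,
          deriv (deriv (fun y => ∫ x in (0 : ℝ)..L, w x y * (starRingEnd ℂ) (φ j x))) y
            + ((k : ℂ) ^ 2 - (lam j : ℂ) ^ 2)
                * (∫ x in (0 : ℝ)..L, w x y * (starRingEnd ℂ) (φ j x)) = 0 := by
  intro j
  have hwc : ContinuousOn (fun p : ℝ × ℝ => w p.1 p.2) {p : ℝ × ℝ | M₀ < p.2} :=
    hcont w (by simp)
  have hw1c : ContinuousOn (fun p : ℝ × ℝ => w1 p.1 p.2) {p : ℝ × ℝ | M₀ < p.2} :=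
    hcont w1 (by simp)
  have hw2c : ContinuousOn (fun p : ℝ × ℝ => w2 p.1 p.2) {p : ℝ × ℝ | M₀ < p.2} :=
    hcont w2 (by simp)
  have hw11c : ContinuousOn (fun p : ℝ × ℝ => w11 p.1 p.2) {p : ℝ × ℝ | M₀ < p.2} :=
    hcont w11 (by simp)
  have hw22c : ContinuousOn (fun p : ℝ × ℝ => w22 p.1 p.2) {p : ℝ × ℝ | M₀ < p.2} :=
    hcont w22 (by simp)
  set c : ℝ → ℂ := fun x => (starRingEnd ℂ) (φ j x) with hcdef
  set a : ℂ := -(Complex.I * (lam j : ℂ)) with hadef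
  have hceq : ∀ x : ℝ, c x = Complex.exp (a * x) / (Real.sqrt L : ℂ) := by
    intro x
    rw [hcdef]
    simp only [hφ j x, map_div₀, ← Complex.exp_conj, Complex.conj_ofReal, map_mul,
      Complex.conj_I, hadef]
    ring_nf
  have hsL : (0:ℝ) < Real.sqrt L := Real.sqrt_pos.mpr hL
  have hsLne : ((Real.sqrt L : ℝ) : ℂ) ≠ 0 := by
    exact_mod_cast ne_of_gt hsL
  have hc : Continuous c := by
    have : c = fun x : ℝ => Complex.exp (a * x) / (Real.sqrt L : ℂ) := funext hceq
    rw [this]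
    fun_prop
  have hc' : ∀ x : ℝ, HasDerivAt c (a * c x) x := by
    intro x
    have h1 : HasDerivAt (fun z : ℂ => Complex.exp (a * z)) (a * Complex.exp (a * x)) (x : ℂ) := by
      simpa [mul_comm] using ((hasDerivAt_id (x : ℂ)).const_mul a).cexp
    have h2 := h1.comp_ofReal
    have h3 := h2.div_const ((Real.sqrt L : ℝ) : ℂ)
    have : (fun y : ℝ => Complex.exp (a * y) / (Real.sqrt L : ℂ)) = c := (funext hceq).symm
    rw [this] at h3
    refine h3.congr_deriv ?_
    rw [hceq x, mul_div_assoc]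
  have hν0 : ν ≠ 0 := by rw [hν]; exact Complex.exp_ne_zero _
  have hcL : ∀ x : ℝ, c (x + L) = ν⁻¹ * c x := by
    intro x
    have hLne : (L:ℂ) ≠ 0 := by exact_mod_cast ne_of_gt hL
    have haL : Complex.exp (a * L) = ν⁻¹ := by
      have hexp : a * (L:ℂ) = (-(Complex.I * k * L * Real.cos θ))
          + ((-j : ℤ) : ℂ) * (2 * Real.pi * Complex.I) := by
        rw [hadef, hlam j]
        push_cast
        field_simp
        ring
      rw [hν, ← Complex.exp_neg, hexp, Complex.exp_add,
        Complex.exp_int_mul_two_pi_mul_I, mul_one]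
    rw [hceq, hceq x]
    push_cast
    rw [mul_add, Complex.exp_add, haL]
    ring
  -- quasiperiodic derivative
  have hqp1 : ∀ x y : ℝ, M₀ < y → w1 (x + L) y = ν * w1 x y := by
    intro x y hy
    have hA : HasDerivAt (fun t => w (t + L) y) (w1 (x + L) y) x :=
      HasDerivAt.comp_add_const x L (hd1 (x + L) y hy)
    have hB : HasDerivAt (fun t => w (t + L) y) (ν * w1 x y) x := by
      have : (fun t => w (t + L) y) = fun t => ν * w t y := funext fun t => hqp t y hy
      rw [this]
      exact (hd1 x y hy).const_mul ν
    exact hA.unique hB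
  -- key integration-by-parts identity
  have hkey : ∀ y : ℝ, M₀ < y →
      (∫ x in (0:ℝ)..L, w11 x y * c x) = -((lam j : ℂ)^2) * ∫ x in (0:ℝ)..L, w x y * c x := by
    intro y hy
    set G : ℝ → ℂ := fun x => w1 x y * c x - w x y * (a * c x) with hGdef
    have hG' : ∀ x : ℝ, HasDerivAt G (w11 x y * c x + (lam j : ℂ)^2 * (w x y * c x)) x := by
      intro x
      have h1 : HasDerivAt (fun x => w1 x y * c x) (w11 x y * c x + w1 x y * (a * c x)) x :=
        (hd11 x y hy).mul (hc' x)
      have h2 : HasDerivAt (fun x => w x y * (a * c x))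
          (w1 x y * (a * c x) + w x y * (a * (a * c x))) x :=
        (hd1 x y hy).mul ((hc' x).const_mul a)
      have h3 := h1.sub h2
      refine h3.congr_deriv ?_
      have ha2 : a * a = -((lam j : ℂ)^2) := by
        rw [hadef]; ring_nf; rw [Complex.I_sq]; ring
      have : a * (a * c x) = a * a * c x := by ring
      rw [this, ha2]
      ring
    have hintegrand : IntervalIntegrable
        (fun x => w11 x y * c x + (lam j : ℂ)^2 * (w x y * c x)) volume 0 L := by
      apply IntervalIntegrable.add
      · exact (slice_cont hc hw11c hy (Set.uIcc 0 L)).intervalIntegrable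
      · exact (continuousOn_const.mul (slice_cont hc hwc hy (Set.uIcc 0 L))).intervalIntegrable
    have hftc := intervalIntegral.integral_eq_sub_of_hasDerivAt
      (fun x _ => hG' x) hintegrand
    have hGL : G L = G 0 := by
      have e1 : w1 L y = ν * w1 0 y := by simpa using hqp1 0 y hy
      have e2 : w L y = ν * w 0 y := by simpa using hqp 0 y hy
      have e3 : c L = ν⁻¹ * c 0 := by simpa using hcL 0
      rw [hGdef]
      simp only [e1, e2, e3]
      field_simp
    rw [hGL, sub_self] at hftc
    have hsplit : (∫ x in (0:ℝ)..L, w11 x y * c x)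
        + (∫ x in (0:ℝ)..L, (lam j : ℂ)^2 * (w x y * c x)) = 0 := by
      rw [← intervalIntegral.integral_add (f := fun x => w11 x y * c x)
          (g := fun x => (lam j : ℂ)^2 * (w x y * c x))
        ((slice_cont hc hw11c hy (Set.uIcc 0 L)).intervalIntegrable)
        ((continuousOn_const.mul (slice_cont hc hwc hy (Set.uIcc 0 L))).intervalIntegrable)]
      exact hftc
    rw [intervalIntegral.integral_const_mul] at hsplit
    linear_combination hsplit
  -- derivatives of the mode
  have hF' : ∀ y₀ ∈ Set.Ioi M₀, HasDerivAt (fun y => ∫ x in (0:ℝ)..L, w x y * c x)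
      (∫ x in (0:ℝ)..L, w2 x y₀ * c x) y₀ := fun y₀ hy₀ => key_deriv hc hwc hw2c hd2 hy₀
  have hF'' : ∀ y₀ ∈ Set.Ioi M₀, HasDerivAt (fun y => ∫ x in (0:ℝ)..L, w2 x y * c x)
      (∫ x in (0:ℝ)..L, w22 x y₀ * c x) y₀ := fun y₀ hy₀ => key_deriv hc hw2c hw22c hd22 hy₀
  have hderiv1 : ∀ y ∈ Set.Ioi M₀,
      deriv (fun y => ∫ x in (0:ℝ)..L, w x y * c x) y = ∫ x in (0:ℝ)..L, w2 x y * c x :=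
    fun y hy => (hF' y hy).deriv
  have hderiv2 : ∀ y ∈ Set.Ioi M₀,
      deriv (deriv (fun y => ∫ x in (0:ℝ)..L, w x y * c x)) y
        = ∫ x in (0:ℝ)..L, w22 x y * c x := by
    intro y hy
    have hev : deriv (fun y => ∫ x in (0:ℝ)..L, w x y * c x)
        =ᶠ[nhds y] (fun y => ∫ x in (0:ℝ)..L, w2 x y * c x) := by
      filter_upwards [isOpen_Ioi.eventually_mem hy] with z hz
      exact hderiv1 z hz
    rw [hev.deriv_eq]
    exact (hF'' y hy).deriv
  constructor
  · -- C² smoothness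
    rw [show (2 : WithTop ℕ∞) = 1 + 1 from by rfl,
      contDiffOn_succ_iff_deriv_of_isOpen isOpen_Ioi]
    refine ⟨fun y hy => ((hF' y hy).differentiableAt.differentiableWithinAt), by simp, ?_⟩
    have h1 : ContDiffOn ℝ 1 (fun y => ∫ x in (0:ℝ)..L, w2 x y * c x) (Set.Ioi M₀) := by
      rw [show (1 : WithTop ℕ∞) = 0 + 1 from by rfl,
        contDiffOn_succ_iff_deriv_of_isOpen isOpen_Ioi]
      refine ⟨fun y hy => ((hF'' y hy).differentiableAt.differentiableWithinAt), by simp, ?_⟩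
      rw [contDiffOn_zero]
      have : ContinuousOn (fun y => ∫ x in (0:ℝ)..L, w22 x y * c x) (Set.Ioi M₀) :=
        key_cont hc hw22c
      exact this.congr fun y hy => (hF'' y hy).deriv
    exact h1.congr fun y hy => hderiv1 y hy
  · -- the ODE
    intro y hy
    rw [hderiv2 y hy]
    have hy' : M₀ < y := hy
    have hrw : (∫ x in (0:ℝ)..L, w22 x y * c x)
        = (lam j : ℂ)^2 * (∫ x in (0:ℝ)..L, w x y * c x)
          - (k:ℂ)^2 * (∫ x in (0:ℝ)..L, w x y * c x) := by
      have hcongr : (∫ x in (0:ℝ)..L, w22 x y * c x)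
          = ∫ x in (0:ℝ)..L, (-(w11 x y) - (k:ℂ)^2 * w x y) * c x := by
        apply intervalIntegral.integral_congr
        intro x _
        have := helm x y hy'
        have h' : w22 x y = -(w11 x y) - (k:ℂ)^2 * w x y := by linear_combination this
        simp only [h']
      rw [hcongr]
      have hsimp : ∀ x : ℝ, (-(w11 x y) - (k:ℂ)^2 * w x y) * c x
          = -(w11 x y * c x) - (k:ℂ)^2 * (w x y * c x) := fun x => by ring
      rw [intervalIntegral.integral_congr (fun x _ => hsimp x)]
      rw [intervalIntegral.integral_sub (f := fun x => -(w11 x y * c x))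
          (g := fun x => (k:ℂ)^2 * (w x y * c x))
        (((slice_cont hc hw11c hy' (Set.uIcc 0 L)).neg).intervalIntegrable)
        ((continuousOn_const.mul (slice_cont hc hwc hy' (Set.uIcc 0 L))).intervalIntegrable)]
      rw [intervalIntegral.integral_neg, intervalIntegral.integral_const_mul, hkey y hy']
      ring
    rw [hrw]
    ring
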